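/- Let K₁ ⊆ ℝ^{n+1} be a nonempty compact convex set with 0 in its interior. Then there exists a constant c > 0, depending only on K₁, with the following property: for every δ > 0 and every compact convex set K₂ with K₁ ⊆ K₂ and inf{ ‖y − z‖ : y ∈ ∂K₁, z ∈ ∂K₂ } ≥ δ, one has H_{K₂}(x) ≥ H_{K₁}(x) + c·δ for every unit vector x ∈ ℝ^{n+1}. -/

import Mathlib

open Set

/-- The support function `H_K(x) = sup_{y ∈ K} ⟨x, y⟩` of a set `K ⊆ ℝ^{n+1}`. -/
noncomputable def supportFn {n : ℕ} (K : Set (EuclideanSpace ℝ (Fin (n + 1))))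
    (x : EuclideanSpace ℝ (Fin (n + 1))) : ℝ :=
  sSup ((fun y => (inner ℝ x y : ℝ)) '' K)

/-- Lemma 11 in the paper, quantitative monotonicity of support
functions. If `K₁` is compact convex with `0` in its interior, then there is `c > 0`
depending only on `K₁` such that whenever `K₂ ⊇ K₁` is compact convex with
`dist(∂K₁, ∂K₂) ≥ δ`, one has `H_{K₂}(x) ≥ H_{K₁}(x) + c δ` for all unit vectors `x`. -/
theorem stmt_3 (n : ℕ) (K₁ : Set (EuclideanSpace ℝ (Fin (n + 1))))
    (hK₁ne : K₁.Nonempty) (hK₁c : IsCompact K₁) (hK₁cv : Convex ℝ K₁)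
    (hK₁0 : (0 : EuclideanSpace ℝ (Fin (n + 1))) ∈ interior K₁) :
    ∃ c : ℝ, 0 < c ∧ ∀ δ : ℝ, 0 < δ →
      ∀ K₂ : Set (EuclideanSpace ℝ (Fin (n + 1))), IsCompact K₂ → Convex ℝ K₂ →
        K₁ ⊆ K₂ → (∀ y ∈ frontier K₁, ∀ z ∈ frontier K₂, δ ≤ ‖y - z‖) →
        ∀ x : EuclideanSpace ℝ (Fin (n + 1)), ‖x‖ = 1 →
          supportFn K₁ x + c * δ ≤ supportFn K₂ x := by
  refine ⟨1, one_pos, ?_⟩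
  intro δ hδ K₂ hK₂c hK₂cv hsub hdist x hx
  have hcont : Continuous fun y : EuclideanSpace ℝ (Fin (n + 1)) => (inner ℝ x y : ℝ) :=
    continuous_const.inner continuous_id
  obtain ⟨y, hyK, hymax⟩ := hK₁c.exists_isMaxOn hK₁ne hcont.continuousOn
  have hinner : ∀ t : ℝ, (inner ℝ x (y + t • x) : ℝ) = inner ℝ x y + t := by
    intro t
    rw [inner_add_right, real_inner_smul_right, real_inner_self_eq_norm_sq, hx]
    ring
  -- y is on the frontier of K₁
  have hyfr : y ∈ frontier K₁ := by
    rw [hK₁c.isClosed.frontier_eq]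
    refine ⟨hyK, fun hyint => ?_⟩
    obtain ⟨ε, hε, hball⟩ := Metric.mem_nhds_iff.mp (mem_interior_iff_mem_nhds.mp hyint)
    have hy' : y + (ε / 2) • x ∈ K₁ := by
      apply hball
      simp only [Metric.mem_ball, dist_eq_norm, add_sub_cancel_left, norm_smul, hx]
      rw [Real.norm_eq_abs, abs_of_pos (by linarith)]
      linarith
    have h2 : (inner ℝ x (y + (ε / 2) • x) : ℝ) ≤ inner ℝ x y := hymax hy'
    rw [hinner (ε / 2)] at h2
    linarith
  -- the key claim: y + δ • x ∈ K₂
  have hz : y + δ • x ∈ K₂ := by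
    by_contra hz
    set S : Set ℝ := Icc 0 δ ∩ {t : ℝ | y + t • x ∈ K₂} with hS
    have h0S : (0 : ℝ) ∈ S := ⟨⟨le_refl 0, hδ.le⟩, by simpa using hsub hyK⟩
    have hSbdd : BddAbove S := ⟨δ, fun t ht => ht.1.2⟩
    have hSclosed : IsClosed S :=
      isClosed_Icc.inter (hK₂c.isClosed.preimage (by continuity))
    set T := sSup S with hT
    have hTS : T ∈ S := hSclosed.csSup_mem ⟨0, h0S⟩ hSbdd
    have hT0 : 0 ≤ T := le_csSup hSbdd h0S
    have hTδ : T < δ := lt_of_le_of_ne hTS.1.2 (fun h => hz (h ▸ hTS.2))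
    have hwfr : y + T • x ∈ frontier K₂ := by
      rw [hK₂c.isClosed.frontier_eq]
      refine ⟨hTS.2, fun hwint => ?_⟩
      obtain ⟨ε, hε, hball⟩ := Metric.mem_nhds_iff.mp (mem_interior_iff_mem_nhds.mp hwint)
      set m := min (ε / 2) ((δ - T) / 2) with hm
      have hmin : 0 < m := lt_min (by linarith) (by linarith)
      have hm1 : m ≤ ε / 2 := min_le_left _ _
      have hm2 : m ≤ (δ - T) / 2 := min_le_right _ _
      have htS : T + m ∈ S := by
        refine ⟨⟨by linarith, by linarith⟩, hball ?_⟩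
        simp only [Metric.mem_ball, dist_eq_norm]
        have hid : y + (T + m) • x - (y + T • x) = m • x := by
          rw [add_smul]; abel
        rw [hid, norm_smul, hx, Real.norm_eq_abs, abs_of_pos hmin, mul_one]
        linarith
      have := le_csSup hSbdd htS
      rw [← hT] at this
      linarith
    have := hdist y hyfr _ hwfr
    have heq : ‖y - (y + T • x)‖ = T := by
      have h : y - (y + T • x) = -(T • x) := by abel
      rw [h, norm_neg, norm_smul, hx, Real.norm_eq_abs, abs_of_nonneg hT0, mul_one]
    rw [heq] at this
    linarith
  -- conclude
  have h1 : supportFn K₁ x ≤ inner ℝ x y := by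
    apply csSup_le (hK₁ne.image _)
    rintro v ⟨u, hu, rfl⟩
    exact hymax hu
  have h2 : (inner ℝ x (y + δ • x) : ℝ) ≤ supportFn K₂ x :=
    le_csSup (hK₂c.image hcont).bddAbove ⟨_, hz, rfl⟩
  rw [hinner δ] at h2
  linarith
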